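/- Let S ∈ ℝ^{d×k} satisfy SᵀS = I_k and A ∈ ℝ^{d×d} be symmetric with eigenvalues λ_1 ≥ ... ≥ λ_d. If the eigenvalues μ_1 ≥ ... ≥ μ_k of C = SᵀAS satisfy μ_i = λ_i for all i = 1,...,k, and v_1,...,v_k are corresponding orthonormal eigenvectors of C, then Sv_i is a λ_i-eigenvector of A for each i. -/

import Mathlib

open Matrix

open Finset in
lemma key_lemma {d k : ℕ} (hkd : k ≤ d) (lam : Fin d → ℝ)
    (hdec : ∀ j l : Fin d, j ≤ l → lam l ≤ lam j)
    (c : Fin d → Fin k → ℝ)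
    (horth : ∀ i l : Fin k, ∑ j, c j i * c j l = if i = l then 1 else 0)
    (hlam : ∀ i : Fin k, ∑ j, lam j * (c j i * c j i) = lam (Fin.castLE hkd i)) :
    ∀ i : Fin k, ∀ j : Fin d, lam j ≠ lam (Fin.castLE hkd i) → c j i = 0 := by
  classical
  suffices H : ∀ n : ℕ, ∀ i : Fin k, i.val = n →
      ∀ j : Fin d, lam j ≠ lam (Fin.castLE hkd i) → c j i = 0 by
    intro i; exact H i.val i rfl
  intro n
  induction n using Nat.strong_induction_on with
  | _ n IHn =>
  intro i hin
  have IH : ∀ l : Fin k, l < i → ∀ m : Fin d, lam m ≠ lam (Fin.castLE hkd l) → c m l = 0 := by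
    intro l hl
    exact IHn l.val (hin ▸ hl) l rfl
  -- Case 1 : lam j > lam i'
  have case1 : ∀ j : Fin d, lam (Fin.castLE hkd i) < lam j → c j i = 0 := by
    intro j hj
    set vv := lam j with hvv
    have hlt : ∀ m : Fin d, lam m = vv → (m : ℕ) < (i : ℕ) := by
      intro m hm
      by_contra h
      push_neg at h
      have : lam m ≤ lam (Fin.castLE hkd i) := hdec _ _ (by simpa [Fin.le_def] using h)
      rw [hm] at this
      exact absurd this (not_le.mpr hj)
    set J := {m : Fin d // lam m = vv} with hJ
    set T := {l : Fin k // lam (Fin.castLE hkd l) = vv} with hT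
    have hTlt : ∀ l : T, (l : Fin k) < i := by
      intro l
      exact Fin.lt_def.mpr (hlt (Fin.castLE hkd l.1) l.2)
    let e : T ≃ J :=
      { toFun := fun l => ⟨Fin.castLE hkd l.1, l.2⟩
        invFun := fun m => ⟨⟨m.1.1, lt_of_lt_of_le (lt_of_lt_of_le (hlt m.1 m.2) (le_of_lt i.isLt)) le_rfl⟩, by
          have : Fin.castLE hkd (⟨m.1.1, lt_of_lt_of_le (lt_of_lt_of_le (hlt m.1 m.2) (le_of_lt i.isLt)) le_rfl⟩ : Fin k) = m.1 := by
            apply Fin.ext; rfl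
          rw [this]; exact m.2⟩
        left_inv := fun l => Subtype.ext (Fin.ext rfl)
        right_inv := fun m => Subtype.ext (Fin.ext rfl) }
    -- restricted sums equal full sums
    have hres : ∀ (l x : Fin k), l < i → lam (Fin.castLE hkd l) = vv →
        ∑ m : J, c m.1 l * c m.1 x = ∑ m, c m l * c m x := by
      intro l x hl hlv
      have h1 : ∑ m : J, c m.1 l * c m.1 x
          = ∑ m ∈ univ.filter (fun m => lam m = vv), c m l * c m x := by
        exact (Finset.sum_subtype (p := fun m : Fin d => lam m = vv)
          (univ.filter (fun m => lam m = vv)) (fun m => by simp) (fun m => c m l * c m x)).symm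
      rw [h1]
      apply Finset.sum_filter_of_ne
      intro m _ hne
      by_contra hmv
      exact hne (by rw [IH l hl m (by rw [hlv]; exact hmv), zero_mul])
    let B : Matrix J J ℝ := fun m y => c m.1 (e.symm y).1
    have hB : Bᵀ * B = 1 := by
      ext y₁ y₂
      simp only [Matrix.mul_apply, Matrix.transpose_apply, Matrix.one_apply]
      simp only [B]
      rw [hres (e.symm y₁).1 (e.symm y₂).1 (hTlt _) (e.symm y₁).2, horth]
      by_cases h : y₁ = y₂
      · subst h; simp
      · rw [if_neg (fun hc => h (e.symm.injective (Subtype.ext hc))), if_neg h]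
    have hB' : B * Bᵀ = 1 := mul_eq_one_comm.mp hB
    have hcol : ∀ y : J, ∑ m : J, B m y * c m.1 i = 0 := by
      intro y
      have hl := hTlt (e.symm y)
      have : ∑ m : J, B m y * c m.1 i = ∑ m : J, c m.1 (e.symm y).1 * c m.1 i := rfl
      rw [this, hres _ i hl (e.symm y).2, horth, if_neg (ne_of_lt hl)]
    have jJmem : lam j = vv := rfl
    set jJ : J := ⟨j, jJmem⟩ with hjJ
    have step1 : c j i = ∑ m : J, (B * Bᵀ) jJ m * c m.1 i := by
      rw [hB']
      simp [Matrix.one_apply]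
      rw [Finset.sum_eq_single jJ (fun b _ hb => if_neg (Ne.symm hb)) (fun h => absurd (Finset.mem_univ _) h), if_pos rfl]
    rw [step1]
    calc ∑ m : J, (B * Bᵀ) jJ m * c m.1 i
        = ∑ m : J, (∑ y : J, B jJ y * B m y) * c m.1 i := by
          simp [Matrix.mul_apply, Matrix.transpose_apply]
      _ = ∑ y : J, B jJ y * (∑ m : J, B m y * c m.1 i) := by
          simp only [Finset.sum_mul, Finset.mul_sum]
          rw [Finset.sum_comm]
          apply Finset.sum_congr rfl; intro y _
          apply Finset.sum_congr rfl; intro m _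
          ring
      _ = 0 := by simp [hcol]
  -- Case 2
  intro j hj
  rcases lt_trichotomy (lam j) (lam (Fin.castLE hkd i)) with hlt | heqq | hgt
  · -- lam j < lam i'
    have hsum1 : ∑ m, c m i * c m i = 1 := by rw [horth i i, if_pos rfl]
    have hsum0 : ∑ m, (lam (Fin.castLE hkd i) - lam m) * (c m i * c m i) = 0 := by
      simp only [sub_mul]
      rw [Finset.sum_sub_distrib, hlam i, ← Finset.mul_sum, hsum1, mul_one, sub_self]
    have hnonneg : ∀ m ∈ Finset.univ, 0 ≤ (lam (Fin.castLE hkd i) - lam m) * (c m i * c m i) := by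
      intro m _
      rcases le_or_gt (lam m) (lam (Fin.castLE hkd i)) with h | h
      · exact mul_nonneg (by linarith) (mul_self_nonneg _)
      · rw [case1 m h]; simp
    have := (Finset.sum_eq_zero_iff_of_nonneg hnonneg).mp hsum0 j (mem_univ j)
    have h2 : c j i * c j i = 0 := by
      rcases mul_eq_zero.mp this with h | h
      · exfalso; linarith [sub_eq_zero.mp h]
      · exact h
    exact mul_self_eq_zero.mp h2
  · exact absurd heqq hj
  · exact case1 j hgt

/-- Equality case of interlacing (Haemers). -/
theorem stmt3 (d k : ℕ) (hkd : k ≤ d)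
    (S : Matrix (Fin d) (Fin k) ℝ) (hS : Sᵀ * S = 1)
    (A : Matrix (Fin d) (Fin d) ℝ) (hA : A.IsSymm)
    (lam : Fin d → ℝ) (uA : Fin d → Fin d → ℝ)
    (horthA : ∀ j l : Fin d, uA j ⬝ᵥ uA l = if j = l then 1 else 0)
    (heigA : ∀ j : Fin d, A.mulVec (uA j) = lam j • uA j)
    (hdecA : ∀ j l : Fin d, j ≤ l → lam l ≤ lam j)
    (mu : Fin k → ℝ) (v : Fin k → Fin k → ℝ)
    (horthC : ∀ j l : Fin k, v j ⬝ᵥ v l = if j = l then 1 else 0)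
    (heigC : ∀ j : Fin k, (Sᵀ * A * S).mulVec (v j) = mu j • v j)
    (hdecC : ∀ j l : Fin k, j ≤ l → mu l ≤ mu j)
    (heq : ∀ i : Fin k, mu i = lam (Fin.castLE hkd i)) :
    ∀ i : Fin k, A.mulVec (S.mulVec (v i)) = lam (Fin.castLE hkd i) • S.mulVec (v i) := by
  classical
  set U : Matrix (Fin d) (Fin d) ℝ := Matrix.of uA with hU
  have hUUt : U * Uᵀ = 1 := by
    ext j l
    simpa [hU, Matrix.mul_apply, Matrix.one_apply, dotProduct] using horthA j l
  have hUtU : Uᵀ * U = 1 := mul_eq_one_comm.mp hUUt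
  have hexp : ∀ x : Fin d → ℝ, ∀ m, ∑ j, (uA j ⬝ᵥ x) * uA j m = x m := by
    intro x m
    have h1 : Uᵀ.mulVec (U.mulVec x) = x := by
      rw [Matrix.mulVec_mulVec, hUtU, Matrix.one_mulVec]
    have h2 := congrFun h1 m
    simpa [hU, Matrix.mulVec, Matrix.mul_apply, dotProduct, Matrix.transpose_apply,
      mul_comm] using h2
  have hpars : ∀ x y : Fin d → ℝ, x ⬝ᵥ y = ∑ j, (uA j ⬝ᵥ x) * (uA j ⬝ᵥ y) := by
    intro x y
    calc x ⬝ᵥ y = ∑ m, x m * y m := rfl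
      _ = ∑ m, (∑ j, (uA j ⬝ᵥ x) * uA j m) * y m := by
          apply Finset.sum_congr rfl; intro m _; rw [hexp x m]
      _ = ∑ j, (uA j ⬝ᵥ x) * (uA j ⬝ᵥ y) := by
          simp only [Finset.sum_mul]
          rw [Finset.sum_comm]
          apply Finset.sum_congr rfl; intro jj _
          simp only [dotProduct, Finset.mul_sum]
          apply Finset.sum_congr rfl; intro m _
          ring
  have hSdot : ∀ (a : Fin k → ℝ) (x : Fin d → ℝ),
      S.mulVec a ⬝ᵥ x = a ⬝ᵥ Sᵀ.mulVec x := by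
    intro a x
    rw [Matrix.mulVec_transpose, dotProduct_comm (S.mulVec a) x,
      Matrix.dotProduct_mulVec, dotProduct_comm]
  set w : Fin k → Fin d → ℝ := fun i => S.mulVec (v i) with hw
  set c : Fin d → Fin k → ℝ := fun j i => uA j ⬝ᵥ w i with hc
  have hwdot : ∀ i l : Fin k, w i ⬝ᵥ w l = if i = l then 1 else 0 := by
    intro i l
    rw [hw]
    rw [hSdot, Matrix.mulVec_mulVec, hS, Matrix.one_mulVec]
    exact horthC i l
  have horth' : ∀ i l : Fin k, ∑ j, c j i * c j l = if i = l then 1 else 0 := by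
    intro i l
    rw [← hpars (w i) (w l), hwdot]
  have hAdot : ∀ (j : Fin d) (x : Fin d → ℝ),
      uA j ⬝ᵥ A.mulVec x = lam j * (uA j ⬝ᵥ x) := by
    intro j x
    rw [Matrix.dotProduct_mulVec]
    have : uA j ᵥ* A = lam j • uA j := by
      conv_lhs => rw [← hA]
      rw [Matrix.vecMul_transpose, heigA j]
    rw [this, smul_dotProduct]
    rfl
  have hgen : ∀ a : Fin k → ℝ, (S *ᵥ a) ⬝ᵥ A *ᵥ (S *ᵥ a) = a ⬝ᵥ (Sᵀ * A * S) *ᵥ a := by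
    intro a
    rw [hSdot, Matrix.mulVec_mulVec, Matrix.mulVec_mulVec]
  have hwAw : ∀ i : Fin k, w i ⬝ᵥ A.mulVec (w i) = mu i := by
    intro i
    have h0 := hgen (v i)
    rw [heigC i, dotProduct_smul, horthC i i, if_pos rfl, smul_eq_mul, mul_one] at h0
    exact h0
  have hlam' : ∀ i : Fin k, ∑ j, lam j * (c j i * c j i) = lam (Fin.castLE hkd i) := by
    intro i
    have h1 : w i ⬝ᵥ A.mulVec (w i) = ∑ j, c j i * (lam j * c j i) := by
      rw [hpars]
      apply Finset.sum_congr rfl; intro j _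
      rw [hAdot j (w i)]
    have h2 := (hwAw i).symm.trans h1
    rw [← heq i, h2]
    apply Finset.sum_congr rfl; intro j _; ring
  have key := key_lemma hkd lam hdecA c horth' hlam'
  intro i
  funext m
  have hL : A.mulVec (w i) m = ∑ j, (lam j * c j i) * uA j m := by
    rw [← hexp (A.mulVec (w i)) m]
    apply Finset.sum_congr rfl; intro j _
    rw [hAdot j (w i)]
  have hR : (lam (Fin.castLE hkd i) • w i) m
      = ∑ j, (lam (Fin.castLE hkd i) * c j i) * uA j m := by
    rw [Pi.smul_apply, smul_eq_mul, ← hexp (w i) m, Finset.mul_sum]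
    apply Finset.sum_congr rfl; intro j _
    ring
  show A.mulVec (w i) m = (lam (Fin.castLE hkd i) • w i) m
  rw [hL, hR]
  apply Finset.sum_congr rfl
  intro j _
  by_cases hj : lam j = lam (Fin.castLE hkd i)
  · rw [hj]
  · rw [key i j hj]; ring
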